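/- The weighted streaming label approximation is bounded: for any node u, letting y_l be the exact un-normalized aggregated label weight y_l = Σ_{i} w_i p_{i,l} over neighbors i=1..d with edge weights w_i and label probabilities p_{i,l}, and ŷ_l the estimate maintained by the weighted lossy-counting procedure with threshold δ, the estimate satisfies ŷ_l ≤ y_l ≤ ŷ_l + δ · Σ_{i=1}^{d} w_i for every label l (where ŷ_l = 0 if label l was deleted). -/

import Mathlib

/-!  Weighted lossy counting for label streams: a node receives from its `t`-th
neighbor a probability vector `p` with edge weight `w`.  The maintained tuples
`(f, Δ)` satisfy: if a label is present its weight is incremented by `w * p l`,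
otherwise the tuple `(w * p l, δ * Σ_{i<t} w_i)` is created; after processing
neighbor `t`, tuples with `f + Δ ≤ δ * Σ_{i≤t} w_i` are deleted. -/

variable {β : Type*}

/-- Insert/increment step for the message `(w, p)`; `Δ₀` is the error assigned
to newly created tuples. -/
noncomputable def wInsert (Δ₀ : ℝ) (σ : β → Option (ℝ × ℝ)) (w : ℝ) (p : β → ℝ) :
    β → Option (ℝ × ℝ) := fun l =>
  match σ l with
  | some (f, Δ) => some (f + w * p l, Δ)
  | none => some (w * p l, Δ₀)

/-- Deletion step: remove all tuples with `f + Δ ≤ thr`. -/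
noncomputable def wDelete (thr : ℝ) (σ : β → Option (ℝ × ℝ)) : β → Option (ℝ × ℝ) := fun l =>
  match σ l with
  | some (f, Δ) => if f + Δ ≤ thr then none else some (f, Δ)
  | none => none

/-- Run the weighted streaming algorithm over the list of messages `(w_t, p_t)`;
`W` is the accumulated weight `Σ_{i<t} w_i` so far. -/
noncomputable def wRun (δ : ℝ) : List (ℝ × (β → ℝ)) → ℝ → (β → Option (ℝ × ℝ)) →
    (β → Option (ℝ × ℝ))
  | [], _, σ => σ
  | (w, p) :: rest, W, σ =>
    wRun δ rest (W + w) (wDelete (δ * (W + w)) (wInsert (δ * W) σ w p))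

/-- Final state after processing all neighbor messages. -/
noncomputable def wState (δ : ℝ) (msgs : List (ℝ × (β → ℝ))) : β → Option (ℝ × ℝ) :=
  wRun δ msgs 0 fun _ => none

/-- The estimate `ŷ_l`: the retained weight `f`, or `0` if the label was deleted. -/
noncomputable def wEst (δ : ℝ) (msgs : List (ℝ × (β → ℝ))) (l : β) : ℝ :=
  match wState δ msgs l with
  | some (f, _) => f
  | none => 0
private lemma wRun_aux (δ : ℝ) (hδ : 0 ≤ δ) (l : β) :
    ∀ (msgs : List (ℝ × (β → ℝ))) (W : ℝ) (σ : β → Option (ℝ × ℝ)) (y0 : ℝ),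
      (∀ mp ∈ msgs, 0 ≤ mp.1) → (∀ mp ∈ msgs, 0 ≤ mp.2 l) → 0 ≤ y0 →
      (∀ f Δ, σ l = some (f, Δ) → f ≤ y0 ∧ y0 ≤ f + Δ ∧ Δ ≤ δ * W) →
      (σ l = none → y0 ≤ δ * W) →
      (∀ f Δ, wRun δ msgs W σ l = some (f, Δ) →
        f ≤ y0 + (msgs.map fun mp => mp.1 * mp.2 l).sum ∧
        y0 + (msgs.map fun mp => mp.1 * mp.2 l).sum ≤ f + Δ ∧
        Δ ≤ δ * (W + (msgs.map Prod.fst).sum)) ∧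
      (wRun δ msgs W σ l = none →
        y0 + (msgs.map fun mp => mp.1 * mp.2 l).sum ≤ δ * (W + (msgs.map Prod.fst).sum))
  | [], W, σ, y0, hw, hp, hy0, hsome, hnone => by
    simpa [wRun] using ⟨hsome, hnone⟩
  | (w, p) :: rest, W, σ, y0, hw, hp, hy0, hsome, hnone => by
    have hw0 : 0 ≤ w := hw (w, p) List.mem_cons_self
    have hp0 : 0 ≤ p l := hp (w, p) List.mem_cons_self
    have hwrest : ∀ mp ∈ rest, 0 ≤ mp.1 := fun mp hm => hw mp (List.mem_cons_of_mem _ hm)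
    have hprest : ∀ mp ∈ rest, 0 ≤ mp.2 l := fun mp hm => hp mp (List.mem_cons_of_mem _ hm)
    have hwp : 0 ≤ w * p l := mul_nonneg hw0 hp0
    have hy0' : 0 ≤ y0 + w * p l := by linarith
    have hδw : δ * W ≤ δ * (W + w) := by nlinarith
    set σ' := wDelete (δ * (W + w)) (wInsert (δ * W) σ w p) with hσ'
    have key : (∀ f Δ, σ' l = some (f, Δ) →
          f ≤ y0 + w * p l ∧ y0 + w * p l ≤ f + Δ ∧ Δ ≤ δ * (W + w)) ∧
        (σ' l = none → y0 + w * p l ≤ δ * (W + w)) := by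
      cases h : σ l with
      | some fΔ =>
        obtain ⟨f, Δ⟩ := fΔ
        obtain ⟨h1, h2, h3⟩ := hsome f Δ h
        by_cases hd : f + w * p l + Δ ≤ δ * (W + w)
        · have hn : σ' l = none := by simp [hσ', wDelete, wInsert, h, hd]
          refine ⟨fun f' Δ' h' => by simp [hn] at h', fun _ => by linarith⟩
        · have hs : σ' l = some (f + w * p l, Δ) := by
            simp [hσ', wDelete, wInsert, h, hd]
          refine ⟨fun f' Δ' h' => ?_, fun h' => by simp [hs] at h'⟩
          rw [hs, Option.some_inj, Prod.mk.injEq] at h'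
          obtain ⟨rfl, rfl⟩ := h'
          exact ⟨by linarith, by linarith, by linarith⟩
      | none =>
        have hn0 := hnone h
        by_cases hd : w * p l + δ * W ≤ δ * (W + w)
        · have hn : σ' l = none := by simp [hσ', wDelete, wInsert, h, hd]
          refine ⟨fun f' Δ' h' => by simp [hn] at h', fun _ => by linarith⟩
        · have hs : σ' l = some (w * p l, δ * W) := by
            simp [hσ', wDelete, wInsert, h, hd]
          refine ⟨fun f' Δ' h' => ?_, fun h' => by simp [hs] at h'⟩
          rw [hs, Option.some_inj, Prod.mk.injEq] at h'
          obtain ⟨rfl, rfl⟩ := h'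
          exact ⟨by linarith, by linarith, by linarith⟩
    have ih := wRun_aux δ hδ l rest (W + w) σ' (y0 + w * p l)
      hwrest hprest hy0' key.1 key.2
    have hrun : wRun δ ((w, p) :: rest) W σ = wRun δ rest (W + w) σ' := by
      simp [wRun, hσ']
    constructor
    · intro f Δ hfΔ
      rw [hrun] at hfΔ
      obtain ⟨a, b, c⟩ := ih.1 f Δ hfΔ
      refine ⟨by simp; linarith, by simp; linarith, by simp; nlinarith⟩
    · intro hfΔ
      rw [hrun] at hfΔ
      have := ih.2 hfΔ
      simp; nlinarith

/-- **Weighted streaming approximation bound**: with exact aggregated label weight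
`y_l = Σ_t w_t * p_{t,l}`, the estimate satisfies `ŷ_l ≤ y_l ≤ ŷ_l + δ * Σ_t w_t`. -/
theorem weighted_streaming_bound (δ : ℝ) (hδ : 0 ≤ δ)
    (msgs : List (ℝ × (β → ℝ)))
    (hw : ∀ mp ∈ msgs, 0 ≤ mp.1)
    (hp : ∀ mp ∈ msgs, ∀ l, 0 ≤ mp.2 l ∧ mp.2 l ≤ 1)
    (l : β) :
    wEst δ msgs l ≤ (msgs.map fun mp => mp.1 * mp.2 l).sum ∧
    (msgs.map fun mp => mp.1 * mp.2 l).sum ≤ wEst δ msgs l + δ * (msgs.map Prod.fst).sum := by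
  have h := wRun_aux δ hδ l msgs 0 (fun _ => none) 0 hw
    (fun mp hm => (hp mp hm l).1) le_rfl
    (fun f Δ h => by simp at h) (fun _ => by simp [hδ])
  unfold wEst wState
  cases hs : wRun δ msgs 0 (fun _ => none) l with
  | some fΔ =>
    obtain ⟨f, Δ⟩ := fΔ
    obtain ⟨a, b, c⟩ := h.1 f Δ hs
    exact ⟨by simpa using a, by simp only; linarith⟩
  | none =>
    have := h.2 hs
    constructor
    · simp only
      have : ∀ mp ∈ msgs, 0 ≤ mp.1 * mp.2 l := fun mp hm =>
        mul_nonneg (hw mp hm) (hp mp hm l).1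
      refine List.sum_nonneg ?_
      intro x hx
      obtain ⟨mp, hm, rfl⟩ := List.mem_map.mp hx
      exact this mp hm
    · simp only; linarith
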